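/- Fuchs–van de Graaf inequalities: for density operators ρ, σ on a finite-dimensional Hilbert space, 1 - F(ρ,σ) ≤ ‖ρ - σ‖_tr ≤ √(1 - F(ρ,σ)²), where F(ρ,σ) = tr√(ρ^{1/2}σρ^{1/2}) and ‖ρ-σ‖_tr = (1/2)tr|ρ-σ|. -/

import Mathlib

open Matrix Kronecker BigOperators Finset
open scoped ComplexOrder

/-- The square root of a positive semidefinite matrix, as `Matrix.PosSemidef.sqrt` was defined
in the older Mathlib (removed since). -/
noncomputable def Matrix.PosSemidef.sqrt {n : Type*} [Fintype n] [DecidableEq n]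
    {A : Matrix n n ℂ} (hA : A.PosSemidef) : Matrix n n ℂ :=
  hA.1.eigenvectorUnitary.1 * diagonal ((↑) ∘ (√·) ∘ hA.1.eigenvalues) *
    (star hA.1.eigenvectorUnitary : Matrix n n ℂ)

namespace Matrix.PosSemidef
open scoped MatrixOrder

lemma sqrt_eq_cfc {n : Type*} [Fintype n] [DecidableEq n] {A : Matrix n n ℂ}
    (hA : A.PosSemidef) : hA.sqrt = CFC.sqrt A := by
  rw [CFC.sqrt_eq_real_sqrt A hA.nonneg, cfcₙ_eq_cfc, hA.1.cfc_eq, IsHermitian.cfc, Unitary.conjStarAlgAut_apply]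
  rfl

lemma posSemidef_sqrt {n : Type*} [Fintype n] [DecidableEq n] {A : Matrix n n ℂ}
    (hA : A.PosSemidef) : hA.sqrt.PosSemidef := by
  rw [sqrt_eq_cfc]
  exact Matrix.nonneg_iff_posSemidef.mp (CFC.sqrt_nonneg A)

lemma sqrt_mul_self {n : Type*} [Fintype n] [DecidableEq n] {A : Matrix n n ℂ}
    (hA : A.PosSemidef) : hA.sqrt * hA.sqrt = A := by
  rw [sqrt_eq_cfc]
  exact CFC.sqrt_mul_sqrt_self A hA.nonneg

lemma eq_sqrt_of_sq_eq {n : Type*} [Fintype n] [DecidableEq n] {B : Matrix n n ℂ}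
    (hB : B.PosSemidef) {A : Matrix n n ℂ} (hA : A.PosSemidef) (h : B ^ 2 = A) :
    B = hA.sqrt := by
  rw [sqrt_eq_cfc]
  exact (CFC.sqrt_unique (by rw [← sq]; exact h) hB.nonneg).symm

end Matrix.PosSemidef

/-- Trace distance: half the trace norm of the difference. -/
noncomputable def traceDist {d : Type*} [Fintype d] [DecidableEq d]
    (ρ σ : Matrix d d ℂ) : ℝ :=
  ((Matrix.posSemidef_conjTranspose_mul_self (ρ - σ)).sqrt.trace).re / 2

/-- A density operator: positive semidefinite with unit trace. -/
def IsDensity {d : Type*} [Fintype d] [DecidableEq d] (ρ : Matrix d d ℂ) : Prop :=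
  ρ.PosSemidef ∧ ρ.trace = 1

/-- Rank-one projection `|v⟩⟨v|` onto a vector. -/
def proj {d : Type*} [Fintype d] [DecidableEq d] (v : d → ℂ) : Matrix d d ℂ :=
  Matrix.vecMulVec v (star v)

/-- A unit vector. -/
def IsUnit' {d : Type*} [Fintype d] (v : d → ℂ) : Prop :=
  dotProduct (star v) v = 1

/-- Partial trace over the second tensor factor. -/
noncomputable def ptraceY {X Y : Type*} [Fintype X] [Fintype Y] [DecidableEq X] [DecidableEq Y]
    (ρ : Matrix (X × Y) (X × Y) ℂ) : Matrix X X ℂ :=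
  fun x x' => ∑ y : Y, ρ (x, y) (x', y)

/-- The fidelity `F(ρ,σ) = tr √(√ρ σ √ρ)` (using that `√ρ` is Hermitian, so
`√ρ σ √ρ = √ρ σ (√ρ)ᴴ` is positive semidefinite). -/
noncomputable def fidelity {d : Type*} [Fintype d] [DecidableEq d]
    {ρ σ : Matrix d d ℂ} (hρ : ρ.PosSemidef) (hσ : σ.PosSemidef) : ℝ :=
  (((hσ.mul_mul_conjTranspose_same hρ.sqrt).sqrt).trace).re

section Helpers
open Matrix BigOperators Finset
open scoped ComplexOrder
variable {d : Type*} [Fintype d] [DecidableEq d]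

namespace FvdG

noncomputable def mabs (M : Matrix d d ℂ) : Matrix d d ℂ :=
  (Matrix.posSemidef_conjTranspose_mul_self M).sqrt

lemma mabs_posSemidef (M : Matrix d d ℂ) : (mabs M).PosSemidef :=
  (Matrix.posSemidef_conjTranspose_mul_self M).posSemidef_sqrt

lemma mabs_mul_self (M : Matrix d d ℂ) : mabs M * mabs M = Mᴴ * M :=
  (Matrix.posSemidef_conjTranspose_mul_self M).sqrt_mul_self

/-- Polar decomposition. -/
lemma polar_exists (M : Matrix d d ℂ) :
    ∃ U : Matrix d d ℂ, U ∈ Matrix.unitaryGroup d ℂ ∧ M = U * mabs M := by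
  classical
  have hH : (mabs M).PosSemidef := mabs_posSemidef M
  have hHer : (mabs M).IsHermitian := hH.1
  set V : Matrix d d ℂ := (hHer.eigenvectorUnitary : Matrix d d ℂ) with hVdef
  set lam : d → ℝ := hHer.eigenvalues with hlam
  set u : d → EuclideanSpace ℂ d := fun i => hHer.eigenvectorBasis i with hu
  have hMv : ∀ i j : d, star ⇑(u i) ⬝ᵥ ((Mᴴ * M) *ᵥ ⇑(u j))
      = (((lam j : ℂ))^2) * (if i = j then 1 else 0) := by
    intro i j
    have h2 : (Mᴴ * M) *ᵥ ⇑(u j) = (lam j • (lam j • ⇑(u j)) : d → ℂ) := by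
      rw [← mabs_mul_self M, ← Matrix.mulVec_mulVec, hHer.mulVec_eigenvectorBasis,
        Matrix.mulVec_smul, hHer.mulVec_eigenvectorBasis]
    rw [h2]
    have horto := orthonormal_iff_ite.mp hHer.eigenvectorBasis.orthonormal i j
    rw [EuclideanSpace.inner_eq_star_dotProduct, dotProduct_comm] at horto
    rw [dotProduct_smul, dotProduct_smul, horto]
    rcases eq_or_ne i j with h | h <;> simp [h, Complex.real_smul] <;> try ring
  have hMin : ∀ i j : d, star (M *ᵥ ⇑(u i)) ⬝ᵥ (M *ᵥ ⇑(u j))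
      = (((lam j : ℂ))^2) * (if i = j then 1 else 0) := by
    intro i j
    rw [Matrix.star_mulVec, Matrix.dotProduct_mulVec, Matrix.vecMul_vecMul,
      ← Matrix.dotProduct_mulVec, ← hMv i j]
  -- the partial isometry columns
  set w : d → EuclideanSpace ℂ d :=
    fun i => (WithLp.equiv 2 _).symm (((lam i : ℂ))⁻¹ • (M *ᵥ ⇑(u i))) with hw
  have hwnorm : Orthonormal ℂ ({i : d | lam i ≠ 0}.restrict w) := by
    rw [orthonormal_iff_ite]
    rintro ⟨i, hi⟩ ⟨j, hj⟩
    rw [EuclideanSpace.inner_eq_star_dotProduct, dotProduct_comm]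
    change star (w i).ofLp ⬝ᵥ (w j).ofLp = _
    simp only [hw, Set.restrict_apply, Equiv.apply_symm_apply, WithLp.equiv_symm_apply, WithLp.ofLp_toLp, star_smul,
      smul_dotProduct, dotProduct_smul, smul_eq_mul]
    rw [hMin i j]
    have hci : star ((lam i : ℂ))⁻¹ = ((lam i : ℂ))⁻¹ := by
      rw [star_inv₀, Complex.star_def, Complex.conj_ofReal]
    rw [hci]
    rcases eq_or_ne i j with h | h
    · subst h
      have hli : (lam i : ℂ) ≠ 0 := by exact_mod_cast hi
      simp only [Subtype.mk.injEq, if_true, eq_self_iff_true, if_pos rfl, mul_one]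
      field_simp
      try ring
    · have hne : (⟨i, hi⟩ : {i : d | lam i ≠ 0}) ≠ ⟨j, hj⟩ := by simpa using h
      rw [if_neg h, if_neg hne]
      ring
  obtain ⟨b, hb⟩ := hwnorm.exists_orthonormalBasis_extension_of_card_eq
    (finrank_euclideanSpace (𝕜 := ℂ) (ι := d))
  set W : Matrix d d ℂ := (EuclideanSpace.basisFun d ℂ).toBasis.toMatrix b.toBasis with hWdef
  have hWmem : W ∈ Matrix.unitaryGroup d ℂ :=
    (EuclideanSpace.basisFun d ℂ).toMatrix_orthonormalBasis_mem_unitary b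
  have hWapp : ∀ i j : d, W i j = b j i := fun i j => rfl
  refine ⟨W * star V, ?_, ?_⟩
  · exact mul_mem hWmem (Unitary.star_mem hHer.eigenvectorUnitary.2)
  · -- M = W * star V * mabs M
    have hdiag : star V * mabs M * V = Matrix.diagonal (Complex.ofReal ∘ lam) :=
      by
        have h := hHer.conjStarAlgAut_star_eigenvectorUnitary
        simp only [Unitary.conjStarAlgAut_apply, Unitary.coe_star, star_star] at h
        exact h
    have hVV : V * star V = 1 := Matrix.mem_unitaryGroup_iff.mp hHer.eigenvectorUnitary.2
    have key : M * V = W * Matrix.diagonal (Complex.ofReal ∘ lam) := by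
      ext x j
      have hMV : (M * V) x j = (M *ᵥ ⇑(u j)) x := by
        simp [Matrix.mul_apply, Matrix.mulVec, dotProduct, hVdef, hu]
      rw [hMV, Matrix.mul_diagonal, hWapp x j]
      rcases eq_or_ne (lam j) 0 with h0 | h0
      · have : (M *ᵥ ⇑(u j)) = 0 := by
          have := hMin j j
          rw [if_pos rfl, h0] at this
          simp only [Complex.ofReal_zero, ne_eq, mul_one] at this
          exact (dotProduct_star_self_eq_zero).mp (by simpa using this)
        simp [this, Function.comp, h0]
      · have hbj : b j = w j := hb j h0
        rw [hbj]
        simp only [hw, WithLp.equiv_symm_apply, WithLp.ofLp_toLp, Pi.smul_apply, smul_eq_mul,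
          Function.comp_apply]
        have hlj : (lam j : ℂ) ≠ 0 := by exact_mod_cast h0
        field_simp
      done
    calc M = M * V * star V := by rw [Matrix.mul_assoc, hVV, Matrix.mul_one]
      _ = W * Matrix.diagonal (Complex.ofReal ∘ lam) * star V := by rw [key]
      _ = W * (star V * mabs M * V) * star V := by rw [hdiag]
      _ = W * star V * mabs M * (V * star V) := by simp only [Matrix.mul_assoc]
      _ = W * star V * mabs M := by rw [hVV, Matrix.mul_one]

lemma sqrt_congr {A B : Matrix d d ℂ} (h : A = B) (hA : A.PosSemidef) (hB : B.PosSemidef) :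
    hA.sqrt = hB.sqrt := by subst h; rfl

lemma eq_mabs_of_sq_eq {M N : Matrix d d ℂ} (hN : N.PosSemidef) (h : N * N = Mᴴ * M) :
    mabs M = N :=
  (hN.eq_sqrt_of_sq_eq (Matrix.posSemidef_conjTranspose_mul_self M) (by rw [pow_two, h])).symm

lemma trace_re_nonneg {M : Matrix d d ℂ} (hM : M.PosSemidef) : 0 ≤ M.trace.re := by
  rw [Matrix.trace, Complex.re_sum]
  refine Finset.sum_nonneg fun i _ => ?_
  have := hM.re_dotProduct_nonneg (Pi.single i 1)
  simpa [dotProduct, Matrix.mulVec_single, Pi.single_apply, Finset.sum_ite_eq,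
    Matrix.diag] using this

/-- trace of `X` as sum over an orthonormal eigenbasis of a Hermitian matrix `R`. -/
lemma trace_eq_sum_eigenbasis {R : Matrix d d ℂ} (hR : R.IsHermitian) (X : Matrix d d ℂ) :
    X.trace = ∑ i, star ⇑(hR.eigenvectorBasis i) ⬝ᵥ (X *ᵥ ⇑(hR.eigenvectorBasis i)) := by
  set V : Matrix d d ℂ := (hR.eigenvectorUnitary : Matrix d d ℂ) with hV
  have hVV : V * star V = 1 := Matrix.mem_unitaryGroup_iff.mp hR.eigenvectorUnitary.2
  have h1 : X.trace = (star V * X * V).trace := by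
    rw [Matrix.trace_mul_cycle, hVV, Matrix.one_mul]
  rw [h1, Matrix.trace]
  refine Finset.sum_congr rfl fun i _ => ?_
  simp only [Matrix.diag, Matrix.mul_apply, Matrix.star_apply, dotProduct,
    Matrix.mulVec, Pi.star_apply, hV, Matrix.IsHermitian.eigenvectorUnitary_apply,
    Finset.sum_mul, Finset.mul_sum]
  rw [Finset.sum_comm]
  exact Finset.sum_congr rfl fun x _ => Finset.sum_congr rfl fun k _ => by ring

lemma conj_mul_self_re (z : ℂ) : ((starRingEnd ℂ) z * z).re = ‖z‖ ^ 2 := by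
  rw [mul_comm, Complex.mul_conj, Complex.ofReal_re, Complex.normSq_eq_norm_sq]

lemma trace_CS (X Y : Matrix d d ℂ) :
    ‖(Xᴴ * Y).trace‖ ≤ Real.sqrt (Xᴴ * X).trace.re * Real.sqrt (Yᴴ * Y).trace.re := by
  classical
  set x : EuclideanSpace ℂ (d × d) := (WithLp.equiv 2 _).symm (fun p => X p.1 p.2) with hx
  set y : EuclideanSpace ℂ (d × d) := (WithLp.equiv 2 _).symm (fun p => Y p.1 p.2) with hy
  have htr : (Xᴴ * Y).trace = inner ℂ x y := by
    simp only [Matrix.trace, Matrix.diag, Matrix.mul_apply, Matrix.conjTranspose_apply,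
      PiLp.inner_apply, RCLike.inner_apply]
    rw [Fintype.sum_prod_type]
    rw [Finset.sum_comm]
    simp only [hx, WithLp.equiv_symm_apply, WithLp.ofLp_toLp, hy, starRingEnd_apply]
    exact Finset.sum_congr rfl fun _ _ => Finset.sum_congr rfl fun _ _ => mul_comm _ _
  have hnx : (Xᴴ * X).trace.re = ‖x‖ ^ 2 := by
    rw [PiLp.norm_sq_eq_of_L2, Matrix.trace, Complex.re_sum, Fintype.sum_prod_type,
      Finset.sum_comm]
    simp only [Matrix.diag, Matrix.mul_apply, Matrix.conjTranspose_apply, Complex.re_sum]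
    congr 1; ext i; congr 1; ext j
    simpa only [hx, WithLp.equiv_symm_apply, WithLp.ofLp_toLp, starRingEnd_apply] using conj_mul_self_re (X j i)
  have hny : (Yᴴ * Y).trace.re = ‖y‖ ^ 2 := by
    rw [PiLp.norm_sq_eq_of_L2, Matrix.trace, Complex.re_sum, Fintype.sum_prod_type,
      Finset.sum_comm]
    simp only [Matrix.diag, Matrix.mul_apply, Matrix.conjTranspose_apply, Complex.re_sum]
    congr 1; ext i; congr 1; ext j
    simpa only [hy, WithLp.equiv_symm_apply, WithLp.ofLp_toLp, starRingEnd_apply] using conj_mul_self_re (Y j i)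
  rw [htr, hnx, hny, Real.sqrt_sq (norm_nonneg _), Real.sqrt_sq (norm_nonneg _)]
  exact norm_inner_le_norm x y


lemma star_unitary_mul_self {U : Matrix d d ℂ} (hU : U ∈ Matrix.unitaryGroup d ℂ) :
    Uᴴ * U = 1 := by
  rw [← Matrix.star_eq_conjTranspose]
  exact Matrix.mem_unitaryGroup_iff'.mp hU

lemma unitary_mul_self_star {U : Matrix d d ℂ} (hU : U ∈ Matrix.unitaryGroup d ℂ) :
    U * Uᴴ = 1 := by
  rw [← Matrix.star_eq_conjTranspose]
  exact Matrix.mem_unitaryGroup_iff.mp hU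

lemma trace_unitary_mul_le {U : Matrix d d ℂ} (hU : U ∈ Matrix.unitaryGroup d ℂ)
    (X : Matrix d d ℂ) : ‖(U * X).trace‖ ≤ (mabs X).trace.re := by
  obtain ⟨Ux, hUx, hX⟩ := polar_exists X
  set S := mabs X with hSdef
  have hS : S.PosSemidef := mabs_posSemidef X
  set T := hS.sqrt with hT
  have hTps : T.PosSemidef := hS.posSemidef_sqrt
  have hTT : T * T = S := hS.sqrt_mul_self
  set W : Matrix d d ℂ := U * Ux with hWdef
  have hWW : Wᴴ * W = 1 := by
    rw [hWdef, Matrix.conjTranspose_mul]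
    calc Uxᴴ * Uᴴ * (U * Ux) = Uxᴴ * (Uᴴ * U) * Ux := by simp only [Matrix.mul_assoc]
      _ = 1 := by rw [star_unitary_mul_self hU, Matrix.mul_one, star_unitary_mul_self hUx]
  have h1 : (U * X).trace = (Tᴴ * (W * T)).trace := by
    rw [hX, ← Matrix.mul_assoc, ← hWdef, ← hTT, hTps.1.eq]
    rw [show W * (T * T) = (W * T) * T from (Matrix.mul_assoc _ _ _).symm,
      Matrix.trace_mul_comm]
  have h2 : ((W * T)ᴴ * (W * T)).trace = S.trace := by
    rw [Matrix.conjTranspose_mul]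
    calc (Tᴴ * Wᴴ * (W * T)).trace = (Tᴴ * (Wᴴ * W) * T).trace := by
          simp only [Matrix.mul_assoc]
      _ = S.trace := by rw [hWW, Matrix.mul_one, hTps.1.eq, hTT]
  have h3 : (Tᴴ * T).trace = S.trace := by rw [hTps.1.eq, hTT]
  calc ‖(U * X).trace‖ = ‖(Tᴴ * (W * T)).trace‖ := by rw [h1]
    _ ≤ Real.sqrt (Tᴴ * T).trace.re * Real.sqrt ((W * T)ᴴ * (W * T)).trace.re := trace_CS _ _
    _ = Real.sqrt S.trace.re * Real.sqrt S.trace.re := by rw [h2, h3]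
    _ = S.trace.re := Real.mul_self_sqrt (trace_re_nonneg hS)

lemma abs_trace_le (X : Matrix d d ℂ) : ‖X.trace‖ ≤ (mabs X).trace.re := by
  simpa using trace_unitary_mul_le (one_mem _) X

lemma mabs_conjTranspose_trace (X : Matrix d d ℂ) : (mabs Xᴴ).trace = (mabs X).trace := by
  obtain ⟨U, hU, hX⟩ := polar_exists X
  set S := mabs X with hSdef
  have hS : S.PosSemidef := mabs_posSemidef X
  have h1 : mabs Xᴴ = U * S * Uᴴ := by
    apply eq_mabs_of_sq_eq (hS.mul_mul_conjTranspose_same U)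
    rw [Matrix.conjTranspose_conjTranspose]
    have hXX : X * Xᴴ = U * (S * S) * Uᴴ := by
      rw [hX, Matrix.conjTranspose_mul, hS.1.eq]
      simp only [Matrix.mul_assoc]
    rw [hXX]
    calc U * S * Uᴴ * (U * S * Uᴴ) = U * (S * ((Uᴴ * U) * S)) * Uᴴ := by
          simp only [Matrix.mul_assoc]
      _ = U * (S * S) * Uᴴ := by rw [star_unitary_mul_self hU, Matrix.one_mul]
  rw [h1, Matrix.trace_mul_cycle, star_unitary_mul_self hU, Matrix.one_mul]

lemma mabs_sub_add_posSemidef {Δ : Matrix d d ℂ} (hΔ : Δ.IsHermitian) :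
    (mabs Δ - Δ).PosSemidef ∧ (mabs Δ + Δ).PosSemidef := by
  set V : Matrix d d ℂ := (hΔ.eigenvectorUnitary : Matrix d d ℂ) with hV
  set lam := hΔ.eigenvalues with hlam
  have hVu : V ∈ Matrix.unitaryGroup d ℂ := hΔ.eigenvectorUnitary.2
  have hVV : Vᴴ * V = 1 := star_unitary_mul_self hVu
  have hspec : Δ = V * Matrix.diagonal (Complex.ofReal ∘ lam) * Vᴴ := by
    rw [← Matrix.star_eq_conjTranspose]; exact hΔ.spectral_theorem
  set D : Matrix d d ℂ := Matrix.diagonal (Complex.ofReal ∘ lam) with hD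
  set D1 : Matrix d d ℂ := Matrix.diagonal (fun i => ((|lam i| : ℝ) : ℂ)) with hD1
  have hD1ps : D1.PosSemidef := Matrix.posSemidef_diagonal_iff.mpr fun i =>
    Complex.zero_le_real.mpr (abs_nonneg _)
  set N : Matrix d d ℂ := V * D1 * Vᴴ with hN
  have hDD : D1 * D1 = D * D := by
    rw [hD1, hD, Matrix.diagonal_mul_diagonal, Matrix.diagonal_mul_diagonal]
    congr 1; ext i
    simp only [Function.comp_apply, ← Complex.ofReal_mul, abs_mul_abs_self]
  have hNabs : mabs Δ = N := by
    apply eq_mabs_of_sq_eq (hD1ps.mul_mul_conjTranspose_same V)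
    rw [hΔ.eq]
    calc V * D1 * Vᴴ * (V * D1 * Vᴴ) = V * (D1 * ((Vᴴ * V) * D1)) * Vᴴ := by
          simp only [Matrix.mul_assoc]
      _ = V * (D1 * D1) * Vᴴ := by rw [hVV, Matrix.one_mul]
      _ = V * (D * D) * Vᴴ := by rw [hDD]
      _ = (V * D * Vᴴ) * (V * D * Vᴴ) := by
          calc V * (D * D) * Vᴴ = V * (D * ((Vᴴ * V) * D)) * Vᴴ := by rw [hVV, Matrix.one_mul]
            _ = (V * D * Vᴴ) * (V * D * Vᴴ) := by simp only [Matrix.mul_assoc]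
      _ = Δ * Δ := by rw [← hspec]
  constructor
  · have : mabs Δ - Δ = V * (D1 - D) * Vᴴ := by
      rw [hNabs, hN, hspec, ← Matrix.sub_mul, ← Matrix.mul_sub]
    rw [this]
    refine Matrix.PosSemidef.mul_mul_conjTranspose_same ?_ V
    rw [hD1, hD, Matrix.diagonal_sub]
    refine Matrix.posSemidef_diagonal_iff.mpr fun i => ?_
    rw [show ((|lam i| : ℝ) : ℂ) - (Complex.ofReal ∘ lam) i = ((|lam i| - lam i : ℝ) : ℂ) by
      push_cast; rfl]
    exact Complex.zero_le_real.mpr (by simp [abs_nonneg, le_abs_self])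
  · have : mabs Δ + Δ = V * (D1 + D) * Vᴴ := by
      rw [hNabs, hN, hspec, ← Matrix.add_mul, ← Matrix.mul_add]
    rw [this]
    refine Matrix.PosSemidef.mul_mul_conjTranspose_same ?_ V
    rw [hD1, hD, Matrix.diagonal_add]
    refine Matrix.posSemidef_diagonal_iff.mpr fun i => ?_
    rw [show ((|lam i| : ℝ) : ℂ) + (Complex.ofReal ∘ lam) i = ((|lam i| + lam i : ℝ) : ℂ) by
      push_cast; rfl]
    refine Complex.zero_le_real.mpr ?_
    have := neg_le_of_abs_le (le_refl |lam i|)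
    linarith

/-- Powers–Størmer inequality. -/
lemma powers_stormer {A B : Matrix d d ℂ} (hA : A.PosSemidef) (hB : B.PosSemidef) :
    ((A - B) * (A - B)).trace.re ≤ (mabs (A * A - B * B)).trace.re := by
  classical
  set R : Matrix d d ℂ := A - B with hRdef
  set S : Matrix d d ℂ := A + B with hSdef
  set Δ : Matrix d d ℂ := A * A - B * B with hDdef
  have hRH : R.IsHermitian := hA.1.sub hB.1
  have hAA : (A * A).IsHermitian := by
    rw [Matrix.IsHermitian, Matrix.conjTranspose_mul, hA.1.eq]
  have hBB : (B * B).IsHermitian := by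
    rw [Matrix.IsHermitian, Matrix.conjTranspose_mul, hB.1.eq]
  have hΔH : Δ.IsHermitian := hAA.sub hBB
  set lam : d → ℝ := hRH.eigenvalues with hlam
  set u : d → (d → ℂ) := fun i => ⇑(hRH.eigenvectorBasis i) with hu
  set q : Matrix d d ℂ → d → ℂ := fun X i => star (u i) ⬝ᵥ (X *ᵥ u i) with hq
  have hnorm : ∀ i, star (u i) ⬝ᵥ u i = 1 := by
    intro i
    have := orthonormal_iff_ite.mp hRH.eigenvectorBasis.orthonormal i i
    rw [EuclideanSpace.inner_eq_star_dotProduct, dotProduct_comm] at this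
    simpa using this
  have hRu : ∀ i, R *ᵥ u i = lam i • u i := fun i => hRH.mulVec_eigenvectorBasis i
  have hqR : ∀ i, q R i = (lam i : ℂ) := by
    intro i
    rw [hq]
    simp only [hRu i, dotProduct_smul]
    rw [hnorm i, Complex.real_smul, mul_one]
  have hqmulL : ∀ (X : Matrix d d ℂ) i, q (R * X) i = (lam i : ℂ) * q X i := by
    intro X i
    rw [hq]
    simp only [← Matrix.mulVec_mulVec]
    rw [Matrix.dotProduct_mulVec]
    have h1 : star (u i) ᵥ* R = star (R *ᵥ u i) := by
      rw [Matrix.star_mulVec, hRH.eq]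
    rw [h1, hRu i, star_smul, smul_dotProduct, star_trivial, Complex.real_smul]
  have hqmulR : ∀ (X : Matrix d d ℂ) i, q (X * R) i = (lam i : ℂ) * q X i := by
    intro X i
    rw [hq]
    simp only [← Matrix.mulVec_mulVec]
    rw [hRu i, Matrix.mulVec_smul, dotProduct_smul, Complex.real_smul]
  have hqadd : ∀ (X Y : Matrix d d ℂ) i, q (X + Y) i = q X i + q Y i := by
    intro X Y i
    rw [hq]
    simp only [Matrix.add_mulVec, dotProduct_add]
  have hqsub : ∀ (X Y : Matrix d d ℂ) i, q (X - Y) i = q X i - q Y i := by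
    intro X Y i
    rw [hq]
    simp only [Matrix.sub_mulVec, dotProduct_sub]
  have hqpos : ∀ (X : Matrix d d ℂ), X.PosSemidef → ∀ i, 0 ≤ (q X i).re := by
    intro X hX i
    exact hX.re_dotProduct_nonneg (u i)
  -- s i bounds
  have hslam : ∀ i, |lam i| ≤ (q S i).re := by
    intro i
    have h1 : 0 ≤ (q S i).re - lam i := by
      have hSR : S - R = B + B := by rw [hSdef, hRdef]; abel
      have := hqpos (B + B) (hB.add hB) i
      rw [← hSR, hqsub] at this
      have hre : (q S i - q R i).re = (q S i).re - lam i := by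
        rw [Complex.sub_re, hqR i, Complex.ofReal_re]
      linarith [hre ▸ this]
    have h2 : 0 ≤ (q S i).re + lam i := by
      have hSR : S + R = A + A := by rw [hSdef, hRdef]; abel
      have := hqpos (A + A) (hA.add hA) i
      rw [← hSR, hqadd] at this
      have hre : (q S i + q R i).re = (q S i).re + lam i := by
        rw [Complex.add_re, hqR i, Complex.ofReal_re]
      linarith [hre ▸ this]
    rw [abs_le]
    constructor <;> linarith
  -- the key identity 2Δ = RS + SR
  have hiden : R * S + S * R = Δ + Δ := by
    rw [hRdef, hSdef, hDdef]
    noncomm_ring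
  have hqΔ : ∀ i, (q Δ i).re = lam i * (q S i).re := by
    intro i
    have h1 : q Δ i + q Δ i = (lam i : ℂ) * q S i + (lam i : ℂ) * q S i := by
      rw [← hqadd, ← hiden, hqadd, hqmulL, hqmulR]
    have h2 : q Δ i = (lam i : ℂ) * q S i := by
      have := h1
      field_simp at this ⊢
      linear_combination this
    rw [h2, Complex.re_ofReal_mul]
  -- compare with |Δ|
  have habs : ∀ i, |(q Δ i).re| ≤ (q (mabs Δ) i).re := by
    intro i
    obtain ⟨hm1, hm2⟩ := mabs_sub_add_posSemidef hΔH
    have h1 := hqpos _ hm1 i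
    have h2 := hqpos _ hm2 i
    rw [hqsub] at h1
    rw [hqadd] at h2
    rw [Complex.sub_re] at h1
    rw [Complex.add_re] at h2
    rw [abs_le]
    constructor <;> linarith
  -- trace identities
  have htrRR : (R * R).trace.re = ∑ i, lam i ^ 2 := by
    rw [trace_eq_sum_eigenbasis hRH, Complex.re_sum]
    refine Finset.sum_congr rfl fun i _ => ?_
    have : star (u i) ⬝ᵥ ((R * R) *ᵥ u i) = q (R * R) i := rfl
    rw [this, hqmulL, hqR, ← Complex.ofReal_mul]
    rw [Complex.ofReal_re, sq]
  have htrabs : (mabs Δ).trace.re = ∑ i, (q (mabs Δ) i).re := by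
    rw [trace_eq_sum_eigenbasis hRH, Complex.re_sum]
  rw [show ((A - B) * (A - B)) = R * R from rfl, htrRR, show mabs (A * A - B * B) = mabs Δ from rfl,
    htrabs]
  refine Finset.sum_le_sum fun i _ => ?_
  calc lam i ^ 2 ≤ |lam i| * (q S i).re := by
        nlinarith [hslam i, abs_nonneg (lam i), sq_abs (lam i)]
    _ = |lam i * (q S i).re| := by
        rw [abs_mul]
        congr 1
        rw [abs_of_nonneg (le_trans (abs_nonneg _) (hslam i))]
    _ = |(q Δ i).re| := by rw [hqΔ i]
    _ ≤ (q (mabs Δ) i).re := habs i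

lemma fidelity_sqrt_eq {ρ σ : Matrix d d ℂ} (hρ : ρ.PosSemidef) (hσ : σ.PosSemidef) :
    (hσ.mul_mul_conjTranspose_same hρ.sqrt).sqrt = mabs (hσ.sqrt * hρ.sqrt) := by
  have hA : (hρ.sqrt).PosSemidef := hρ.posSemidef_sqrt
  have hB : (hσ.sqrt).PosSemidef := hσ.posSemidef_sqrt
  have hBB : hσ.sqrt * hσ.sqrt = σ := hσ.sqrt_mul_self
  have h : hρ.sqrt * σ * hρ.sqrtᴴ = (hσ.sqrt * hρ.sqrt)ᴴ * (hσ.sqrt * hρ.sqrt) := by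
    conv_rhs => rw [Matrix.conjTranspose_mul, hA.1.eq, hB.1.eq,
      show hρ.sqrt * hσ.sqrt * (hσ.sqrt * hρ.sqrt)
        = hρ.sqrt * (hσ.sqrt * hσ.sqrt) * hρ.sqrt by simp only [Matrix.mul_assoc], hBB]
    rw [hA.1.eq]
  exact sqrt_congr h (hσ.mul_mul_conjTranspose_same hρ.sqrt)
    (Matrix.posSemidef_conjTranspose_mul_self _)

end FvdG

end Helpers

/-- Fuchs–van de Graaf inequalities:
`1 - F(ρ,σ) ≤ ‖ρ-σ‖_tr ≤ √(1 - F(ρ,σ)²)` for density operators `ρ, σ`. -/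



theorem fuchs_van_de_graaf
    {d : Type*} [Fintype d] [DecidableEq d]
    (ρ σ : Matrix d d ℂ) (hρ : IsDensity ρ) (hσ : IsDensity σ) :
    1 - fidelity hρ.1 hσ.1 ≤ traceDist ρ σ ∧
      traceDist ρ σ ≤ Real.sqrt (1 - (fidelity hρ.1 hσ.1) ^ 2) := by
  classical
  have hA : (hρ.1.sqrt).PosSemidef := hρ.1.posSemidef_sqrt
  have hB : (hσ.1.sqrt).PosSemidef := hσ.1.posSemidef_sqrt
  have hFid : fidelity hρ.1 hσ.1 = (FvdG.mabs (hσ.1.sqrt * hρ.1.sqrt)).trace.re := by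
    unfold fidelity
    rw [FvdG.fidelity_sqrt_eq hρ.1 hσ.1]
  set A : Matrix d d ℂ := hρ.1.sqrt with hAdef
  set B : Matrix d d ℂ := hσ.1.sqrt with hBdef
  have hAsq : A * A = ρ := hρ.1.sqrt_mul_self
  have hBsq : B * B = σ := hσ.1.sqrt_mul_self
  have htrρ : ρ.trace = 1 := hρ.2
  have htrσ : σ.trace = 1 := hσ.2
  clear_value A B
  set F : ℝ := (FvdG.mabs (B * A)).trace.re with hFdef
  have hTDeq : traceDist ρ σ = (FvdG.mabs (ρ - σ)).trace.re / 2 := rfl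
  have hF0 : 0 ≤ F := FvdG.trace_re_nonneg (FvdG.mabs_posSemidef _)
  -- relating (A*B) and (B*A)
  have hba : (B * A)ᴴ = A * B := by
    rw [Matrix.conjTranspose_mul, hA.1.eq, hB.1.eq]
  have hFtr : (FvdG.mabs (A * B)).trace.re = F := by
    have h := FvdG.mabs_conjTranspose_trace (B * A)
    rw [hba] at h
    rw [h]
  ------------------------------------------------------------------
  -- Lower bound
  ------------------------------------------------------------------
  have hPS := FvdG.powers_stormer hA hB
  rw [hAsq, hBsq] at hPS
  have hexpR : (A - B) * (A - B) = ρ + σ - (A * B) - (B * A) := by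
    rw [← hAsq, ← hBsq]; noncomm_ring
  have htrAB : (A * B).trace = (B * A).trace := Matrix.trace_mul_comm A B
  have htrRR : ((A - B) * (A - B)).trace.re = 2 - 2 * ((B * A).trace).re := by
    rw [hexpR, Matrix.trace_sub, Matrix.trace_sub, Matrix.trace_add, htrρ, htrσ, htrAB]
    simp [Complex.sub_re, Complex.add_re]
    ring
  have hreBA : ((B * A).trace).re ≤ F := le_trans (Complex.re_le_norm _) (FvdG.abs_trace_le _)
  have hlower : 1 - fidelity hρ.1 hσ.1 ≤ traceDist ρ σ := by
    rw [hFid, hTDeq]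
    have := htrRR ▸ hPS
    linarith
  refine ⟨hlower, ?_⟩
  ------------------------------------------------------------------
  -- Upper bound
  ------------------------------------------------------------------
  obtain ⟨U₁, hU₁, hpol⟩ := FvdG.polar_exists (A * B)
  have hU1s : U₁ᴴ * U₁ = 1 := FvdG.star_unitary_mul_self hU₁
  set C : Matrix d d ℂ := B * U₁ᴴ with hCdef
  clear_value C
  have hCC : C * Cᴴ = σ := by
    rw [hCdef, Matrix.conjTranspose_mul, Matrix.conjTranspose_conjTranspose, hB.1.eq]
    calc B * U₁ᴴ * (U₁ * B) = B * (U₁ᴴ * U₁) * B := by simp only [Matrix.mul_assoc]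
      _ = σ := by rw [hU1s, Matrix.mul_one, hBsq]
  have htrCC : (Cᴴ * C).trace = 1 := by
    rw [Matrix.trace_mul_comm, hCC, htrσ]
  have htrAC : (Aᴴ * C).trace = (FvdG.mabs (A * B)).trace := by
    have h1 : Aᴴ * C = (A * B) * U₁ᴴ := by
      rw [hA.1.eq, hCdef, ← Matrix.mul_assoc]
    rw [h1]
    conv_lhs => rw [hpol]
    rw [Matrix.trace_mul_cycle, hU1s, Matrix.one_mul]
  have htrAC' : ((Aᴴ * C).trace).re = F := by rw [htrAC, hFtr]
  have htrCA : ((Cᴴ * A).trace).re = F := by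
    have h : Cᴴ * A = (Aᴴ * C)ᴴ := by
      conv_rhs => rw [Matrix.conjTranspose_mul, Matrix.conjTranspose_conjTranspose]
    rw [h, Matrix.trace_conjTranspose]
    rw [Complex.star_def, Complex.conj_re, htrAC']
  have htrAA : (Aᴴ * A).trace = 1 := by rw [hA.1.eq, hAsq, htrρ]
  set a : ℝ := (((A - C)ᴴ * (A - C)).trace).re with hadef
  set b : ℝ := (((A + C)ᴴ * (A + C)).trace).re with hbdef
  have ha : a = 2 - 2 * F := by
    have hexp : (A - C)ᴴ * (A - C) = Aᴴ * A - Aᴴ * C - Cᴴ * A + Cᴴ * C := by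
      rw [Matrix.conjTranspose_sub]; noncomm_ring
    rw [hadef, hexp, Matrix.trace_add, Matrix.trace_sub, Matrix.trace_sub, htrAA, htrCC]
    rw [Complex.add_re, Complex.sub_re, Complex.sub_re, htrAC', htrCA]
    simp; ring
  have hb : b = 2 + 2 * F := by
    have hexp : (A + C)ᴴ * (A + C) = Aᴴ * A + Aᴴ * C + Cᴴ * A + Cᴴ * C := by
      rw [Matrix.conjTranspose_add]; noncomm_ring
    rw [hbdef, hexp, Matrix.trace_add, Matrix.trace_add, Matrix.trace_add, htrAA, htrCC]
    rw [Complex.add_re, Complex.add_re, Complex.add_re, htrAC', htrCA]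
    simp; ring
  have ha0 : 0 ≤ a := FvdG.trace_re_nonneg (Matrix.posSemidef_conjTranspose_mul_self _)
  have hb0 : 0 ≤ b := FvdG.trace_re_nonneg (Matrix.posSemidef_conjTranspose_mul_self _)
  set X : Matrix d d ℂ := (A - C) * (A + C)ᴴ with hXdef
  clear_value X
  have hXsum : X + Xᴴ = (ρ - σ) + (ρ - σ) := by
    rw [hXdef, Matrix.conjTranspose_mul, Matrix.conjTranspose_conjTranspose,
      Matrix.conjTranspose_sub, Matrix.conjTranspose_add, hA.1.eq, ← hAsq, ← hCC]
    noncomm_ring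
  obtain ⟨U₀, hU₀, hpolΔ⟩ := FvdG.polar_exists (ρ - σ)
  have hU0s : U₀ᴴ ∈ Matrix.unitaryGroup d ℂ := by
    rw [← Matrix.star_eq_conjTranspose]; exact Unitary.star_mem hU₀
  have hmabsΔ : FvdG.mabs (ρ - σ) = U₀ᴴ * (ρ - σ) := by
    calc FvdG.mabs (ρ - σ) = (U₀ᴴ * U₀) * FvdG.mabs (ρ - σ) := by
          rw [FvdG.star_unitary_mul_self hU₀, Matrix.one_mul]
      _ = U₀ᴴ * (U₀ * FvdG.mabs (ρ - σ)) := by rw [Matrix.mul_assoc]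
      _ = U₀ᴴ * (ρ - σ) := by rw [← hpolΔ]
  have hsplit : (FvdG.mabs (ρ - σ)).trace + (FvdG.mabs (ρ - σ)).trace
      = (U₀ᴴ * X).trace + (U₀ᴴ * Xᴴ).trace := by
    rw [hmabsΔ, ← Matrix.trace_add, ← Matrix.trace_add, ← Matrix.mul_add, ← Matrix.mul_add,
      hXsum]
  have hbound1 : ((U₀ᴴ * X).trace).re ≤ (FvdG.mabs X).trace.re :=
    le_trans (Complex.re_le_norm _) (FvdG.trace_unitary_mul_le hU0s X)
  have hbound2 : ((U₀ᴴ * Xᴴ).trace).re ≤ (FvdG.mabs X).trace.re := by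
    have h := le_trans (Complex.re_le_norm _) (FvdG.trace_unitary_mul_le hU0s Xᴴ)
    rwa [FvdG.mabs_conjTranspose_trace X] at h
  have hTDle : (FvdG.mabs (ρ - σ)).trace.re * 2 ≤ 2 * (FvdG.mabs X).trace.re := by
    have := congrArg Complex.re hsplit
    rw [Complex.add_re, Complex.add_re] at this
    linarith
  -- Cauchy–Schwarz bound on tr |X|
  have hXbound : (FvdG.mabs X).trace.re ≤ Real.sqrt b * Real.sqrt a := by
    obtain ⟨U₂, hU₂, hpolX⟩ := FvdG.polar_exists X
    have hmabsX : FvdG.mabs X = U₂ᴴ * X := by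
      calc FvdG.mabs X = (U₂ᴴ * U₂) * FvdG.mabs X := by
            rw [FvdG.star_unitary_mul_self hU₂, Matrix.one_mul]
        _ = U₂ᴴ * (U₂ * FvdG.mabs X) := by rw [Matrix.mul_assoc]
        _ = U₂ᴴ * X := by rw [← hpolX]
    have htr2 : (U₂ᴴ * X).trace = ((U₂ * (A + C))ᴴ * (A - C)).trace := by
      rw [hXdef, show U₂ᴴ * ((A - C) * (A + C)ᴴ) = (U₂ᴴ * (A - C)) * (A + C)ᴴ by
        simp only [Matrix.mul_assoc], Matrix.trace_mul_comm,
        show (A + C)ᴴ * (U₂ᴴ * (A - C)) = ((A + C)ᴴ * U₂ᴴ) * (A - C) from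
          (Matrix.mul_assoc _ _ _).symm, ← Matrix.conjTranspose_mul]
    have hq : (((U₂ * (A + C))ᴴ * (U₂ * (A + C))).trace).re = b := by
      rw [Matrix.conjTranspose_mul,
        show (A + C)ᴴ * U₂ᴴ * (U₂ * (A + C)) = (A + C)ᴴ * (U₂ᴴ * U₂) * (A + C) by
          simp only [Matrix.mul_assoc], FvdG.star_unitary_mul_self hU₂, Matrix.mul_one]
    calc (FvdG.mabs X).trace.re = ((((U₂ * (A + C))ᴴ) * (A - C)).trace).re := by
          rw [hmabsX, htr2]
      _ ≤ ‖(((U₂ * (A + C))ᴴ) * (A - C)).trace‖ := Complex.re_le_norm _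
      _ ≤ Real.sqrt (((U₂ * (A + C))ᴴ * (U₂ * (A + C))).trace).re
            * Real.sqrt (((A - C)ᴴ * (A - C)).trace).re := FvdG.trace_CS _ _
      _ = Real.sqrt b * Real.sqrt a := by rw [hq]
  have hsqrtba : Real.sqrt b * Real.sqrt a = 2 * Real.sqrt (1 - F ^ 2) := by
    rw [← Real.sqrt_mul hb0]
    have hba4 : b * a = 2 ^ 2 * (1 - F ^ 2) := by rw [ha, hb]; ring
    rw [hba4, Real.sqrt_mul (by positivity), Real.sqrt_sq (by norm_num)]
  rw [hFid, hTDeq]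
  have hfinal : (FvdG.mabs (ρ - σ)).trace.re ≤ 2 * Real.sqrt (1 - F ^ 2) := by
    rw [← hsqrtba]
    linarith
  linarith
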